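/- Let (Ω, 𝓕, P) be a probability space and for each T > 0 let Y_T : Ω → ℝ be a random variable with |Y_T| ≤ M·T almost surely, where M ≥ 0. Suppose there are constants ε > 0, C > 0, λ > 0 such that P(|Y_T| ≥ ε T) ≤ C exp(−λ T) for all T > 0. Then limsup_{T → ∞} T⁻¹ log E[exp(β Y_T)] ≤ max( |β| ε, |β| M − λ ) for every β ∈ ℝ. -/

import Mathlib

open MeasureTheory

/-- Limsup bound for the normalized log-moment-generating function:
`limsup_{T → ∞} T⁻¹ log E[exp(β Y_T)] ≤ max(|β| ε, |β| M − λ)`. -/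
theorem limsup_normalized_log_mgf_le {Ω : Type*} [MeasurableSpace Ω] (P : Measure Ω)
    [IsProbabilityMeasure P] (Y : ℝ → Ω → ℝ) (hY : ∀ T, Measurable (Y T))
    (M : ℝ) (hM : 0 ≤ M) (hbd : ∀ T > (0 : ℝ), ∀ᵐ ω ∂P, |Y T ω| ≤ M * T)
    (ε C lam : ℝ) (hε : 0 < ε) (hC : 0 < C) (hlam : 0 < lam)
    (htail : ∀ T > (0 : ℝ), (P {ω | ε * T ≤ |Y T ω|}).toReal ≤ C * Real.exp (-lam * T)) :
    ∀ β : ℝ,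
      Filter.limsup
          (fun T : ℝ => T⁻¹ * Real.log (∫ ω, Real.exp (β * Y T ω) ∂P)) Filter.atTop
        ≤ max (|β| * ε) (|β| * M - lam) := by
  intro β
  set m : ℝ := max (|β| * ε) (|β| * M - lam) with hm
  set f : ℝ → ℝ := fun T => T⁻¹ * Real.log (∫ ω, Real.exp (β * Y T ω) ∂P) with hf
  have habs : ∀ T > (0 : ℝ), ∀ᵐ ω ∂P, β * Y T ω ≤ |β| * M * T := by
    intro T hT
    filter_upwards [hbd T hT] with ω hω
    calc β * Y T ω ≤ |β * Y T ω| := le_abs_self _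
      _ = |β| * |Y T ω| := abs_mul _ _
      _ ≤ |β| * (M * T) := by gcongr
      _ = |β| * M * T := by ring
  have hint : ∀ T > (0 : ℝ), Integrable (fun ω => Real.exp (β * Y T ω)) P := by
    intro T hT
    refine Integrable.mono' (integrable_const (Real.exp (|β| * M * T)))
      (((hY T).const_mul β).exp.aestronglyMeasurable) ?_
    filter_upwards [habs T hT] with ω hω
    rw [Real.norm_eq_abs, abs_of_pos (Real.exp_pos _)]
    exact Real.exp_le_exp.2 hω
  -- key upper bound on the integral
  have key : ∀ T > (0 : ℝ),
      (∫ ω, Real.exp (β * Y T ω) ∂P) ≤ (1 + C) * Real.exp (m * T) := by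
    intro T hT
    set A : Set Ω := {ω | ε * T ≤ |Y T ω|} with hA
    have hAmeas : MeasurableSet A := measurableSet_le measurable_const ((hY T).abs)
    have hRHSint : Integrable (fun ω =>
        Real.exp (|β| * ε * T) + A.indicator (fun _ => Real.exp (|β| * M * T)) ω) P := by
      exact (integrable_const _).add
        ((integrable_const _).indicator hAmeas)
    have hpt : ∀ᵐ ω ∂P, Real.exp (β * Y T ω)
        ≤ Real.exp (|β| * ε * T) + A.indicator (fun _ => Real.exp (|β| * M * T)) ω := by
      filter_upwards [habs T hT] with ω hω
      by_cases hωA : ω ∈ A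
      · rw [Set.indicator_of_mem hωA]
        have h1 : Real.exp (β * Y T ω) ≤ Real.exp (|β| * M * T) := Real.exp_le_exp.2 hω
        linarith [Real.exp_pos (|β| * ε * T)]
      · rw [Set.indicator_of_notMem hωA]
        have hlt : |Y T ω| ≤ ε * T := le_of_lt (lt_of_not_ge hωA)
        have : β * Y T ω ≤ |β| * ε * T := by
          calc β * Y T ω ≤ |β * Y T ω| := le_abs_self _
            _ = |β| * |Y T ω| := abs_mul _ _
            _ ≤ |β| * (ε * T) := by gcongr
            _ = |β| * ε * T := by ring
        simpa using Real.exp_le_exp.2 this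
    have h1 : (∫ ω, Real.exp (β * Y T ω) ∂P)
        ≤ ∫ ω, (Real.exp (|β| * ε * T)
            + A.indicator (fun _ => Real.exp (|β| * M * T)) ω) ∂P :=
      integral_mono_ae (hint T hT) hRHSint hpt
    have h2 : (∫ ω, (Real.exp (|β| * ε * T)
            + A.indicator (fun _ => Real.exp (|β| * M * T)) ω) ∂P)
        = Real.exp (|β| * ε * T) + (P A).toReal * Real.exp (|β| * M * T) := by
      rw [integral_add (integrable_const _) ((integrable_const _).indicator hAmeas),
        integral_const, integral_indicator_const _ hAmeas]
      simp [smul_eq_mul]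
      rfl
    have h3 : (P A).toReal * Real.exp (|β| * M * T)
        ≤ C * Real.exp ((|β| * M - lam) * T) := by
      calc (P A).toReal * Real.exp (|β| * M * T)
          ≤ (C * Real.exp (-lam * T)) * Real.exp (|β| * M * T) := by
            gcongr; exact htail T hT
        _ = C * Real.exp ((|β| * M - lam) * T) := by
            rw [mul_assoc, ← Real.exp_add]; ring_nf
    have hme : |β| * ε * T ≤ m * T := by
      apply mul_le_mul_of_nonneg_right (le_max_left _ _) hT.le
    have hmM : (|β| * M - lam) * T ≤ m * T := by
      apply mul_le_mul_of_nonneg_right (le_max_right _ _) hT.le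
    calc (∫ ω, Real.exp (β * Y T ω) ∂P)
        ≤ Real.exp (|β| * ε * T) + (P A).toReal * Real.exp (|β| * M * T) := h1.trans h2.le
      _ ≤ Real.exp (m * T) + C * Real.exp (m * T) := by
          have h5 : C * Real.exp ((|β| * M - lam) * T) ≤ C * Real.exp (m * T) :=
            mul_le_mul_of_nonneg_left (Real.exp_le_exp.2 hmM) hC.le
          have h4 : Real.exp (|β| * ε * T) ≤ Real.exp (m * T) := Real.exp_le_exp.2 hme
          linarith [h3.trans h5]
      _ = (1 + C) * Real.exp (m * T) := by ring
  -- positivity of the integral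
  have hpos : ∀ T > (0 : ℝ), 0 < ∫ ω, Real.exp (β * Y T ω) ∂P := by
    intro T hT
    exact integral_exp_pos (hint T hT)
  -- lower bound: f is eventually bounded below
  have hlow : ∀ T > (0 : ℝ), -(|β| * M) ≤ f T := by
    intro T hT
    have hge : Real.exp (-(|β| * M * T)) ≤ ∫ ω, Real.exp (β * Y T ω) ∂P := by
      have hpt : ∀ᵐ ω ∂P, Real.exp (-(|β| * M * T)) ≤ Real.exp (β * Y T ω) := by
        filter_upwards [hbd T hT] with ω hω
        apply Real.exp_le_exp.2
        have : -(β * Y T ω) ≤ |β| * M * T := by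
          calc -(β * Y T ω) ≤ |β * Y T ω| := neg_le_abs _
            _ = |β| * |Y T ω| := abs_mul _ _
            _ ≤ |β| * (M * T) := by gcongr
            _ = |β| * M * T := by ring
        linarith
      calc Real.exp (-(|β| * M * T)) = ∫ _ω, Real.exp (-(|β| * M * T)) ∂P := by
            simp
        _ ≤ ∫ ω, Real.exp (β * Y T ω) ∂P := integral_mono_ae (integrable_const _) (hint T hT) hpt
    have hlog : -(|β| * M * T) ≤ Real.log (∫ ω, Real.exp (β * Y T ω) ∂P) := by
      calc -(|β| * M * T) = Real.log (Real.exp (-(|β| * M * T))) := (Real.log_exp _).symm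
        _ ≤ _ := Real.log_le_log (Real.exp_pos _) hge
    have := mul_le_mul_of_nonneg_left hlog (inv_nonneg.2 hT.le)
    calc -(|β| * M) = T⁻¹ * -(|β| * M * T) := by field_simp
      _ ≤ f T := this
  -- upper bound: f T ≤ m + T⁻¹ * log (1 + C)
  have hupper : ∀ T > (0 : ℝ), f T ≤ m + T⁻¹ * Real.log (1 + C) := by
    intro T hT
    have hlog : Real.log (∫ ω, Real.exp (β * Y T ω) ∂P)
        ≤ Real.log (1 + C) + m * T := by
      calc Real.log (∫ ω, Real.exp (β * Y T ω) ∂P)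
          ≤ Real.log ((1 + C) * Real.exp (m * T)) :=
            Real.log_le_log (hpos T hT) (key T hT)
        _ = Real.log (1 + C) + m * T := by
            rw [Real.log_mul (by positivity) (Real.exp_pos _).ne', Real.log_exp]
    have := mul_le_mul_of_nonneg_left hlog (inv_nonneg.2 hT.le)
    calc f T ≤ T⁻¹ * (Real.log (1 + C) + m * T) := this
      _ = m + T⁻¹ * Real.log (1 + C) := by field_simp; ring
  -- conclude via limsup
  set g : ℝ → ℝ := fun T => m + T⁻¹ * Real.log (1 + C) with hg
  have hgtend : Filter.Tendsto g Filter.atTop (nhds m) := by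
    have : Filter.Tendsto (fun T : ℝ => T⁻¹ * Real.log (1 + C)) Filter.atTop (nhds 0) := by
      simpa using tendsto_inv_atTop_zero.mul_const (Real.log (1 + C))
    simpa using (tendsto_const_nhds.add this : Filter.Tendsto (fun T => m + T⁻¹ * Real.log (1 + C)) Filter.atTop (nhds (m + 0)))
  have hfg : ∀ᶠ T in Filter.atTop, f T ≤ g T := by
    filter_upwards [Filter.eventually_gt_atTop (0 : ℝ)] with T hT
    exact hupper T hT
  have hcb : Filter.IsCoboundedUnder (· ≤ ·) Filter.atTop f := by
    apply Filter.isCoboundedUnder_le_of_eventually_le Filter.atTop (x := -(|β| * M))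
    filter_upwards [Filter.eventually_gt_atTop (0 : ℝ)] with T hT
    exact hlow T hT
  have hbdd : Filter.IsBoundedUnder (· ≤ ·) Filter.atTop g :=
    hgtend.isBoundedUnder_le
  calc Filter.limsup f Filter.atTop ≤ Filter.limsup g Filter.atTop :=
        Filter.limsup_le_limsup hfg hcb hbdd
    _ = m := hgtend.limsup_eq
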